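/- For all integers q ≥ 2 and n ≥ 1, the family 𝓖_q ∪ 𝓛_q is n-cell implementable under scenario (∗◦) if and only if q ≤ n. -/

import Mathlib

/-- The alphabet 𝔹• = {0, 1, ∗, •}. -/
inductive BB : Type
  | zero
  | one
  | star
  | reject
deriving DecidableEq

instance : Fintype BB where
  elems := {BB.zero, BB.one, BB.star, BB.reject}
  complete := by intro x; cases x <;> simp

/-- The cell function T : 𝔹• × 𝔹• → 𝔹: T(u,ϑ) = 1 iff u = ∗, or ϑ = ∗,
or u,ϑ ∈ 𝔹 with u = ϑ. -/
def Tcell : BB → BB → Bool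
  | BB.star, _ => true
  | _, BB.star => true
  | BB.zero, BB.zero => true
  | BB.one, BB.one => true
  | _, _ => false

/-- The word-level function T(u,ϑ) = ⋀_{j<n} T(u_j, ϑ_j). -/
def Tword {n : ℕ} (u θ : Fin n → BB) : Bool :=
  decide (∀ j, Tcell (u j) (θ j) = true)

/-- The alphabet 𝔹 = {0,1} ⊆ 𝔹•. -/
def Bcirc : Set BB := {BB.zero, BB.one}

/-- The alphabet 𝔹∗ = {0,1,∗} ⊆ 𝔹•. -/
def Bstar : Set BB := {BB.zero, BB.one, BB.star}

/-- The full alphabet 𝔹•. -/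
def Bdot : Set BB := Set.univ

/-- A family Φ of functions {0,…,q−1} → 𝔹 is n-cell implementable under
scenario (A,B) if there are mappings u : {0,…,q−1} → A^n and ϑ : Φ → B^n
with f(x) = T(u(x), ϑ(f)) for all f ∈ Φ and x. -/
def Implementable (A B : Set BB) (n q : ℕ) (Φ : Set (Fin q → Bool)) : Prop :=
  ∃ u : Fin q → Fin n → BB, ∃ θ : (Fin q → Bool) → Fin n → BB,
    (∀ x j, u x j ∈ A) ∧ (∀ f ∈ Φ, ∀ j, θ f j ∈ B) ∧
    (∀ f ∈ Φ, ∀ x, f x = Tword (u x) (θ f))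

/-- The family 𝓔_q = { x ↦ [x = t] : t ∈ [q⟩ }. -/
def Eset (q : ℕ) : Set (Fin q → Bool) :=
  { f | ∃ t : Fin q, f = fun x => decide (x = t) }

/-- The family 𝓝_q = { x ↦ [x ≠ t] : t ∈ [q⟩ }. -/
def Nset (q : ℕ) : Set (Fin q → Bool) :=
  { f | ∃ t : Fin q, f = fun x => decide (x ≠ t) }

/-- The family 𝓖_q = { x ↦ [x ≥ t] : t ∈ [q⟩ }. -/
def Gset (q : ℕ) : Set (Fin q → Bool) :=
  { f | ∃ t : Fin q, f = fun x => decide (t ≤ x) }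

/-- The family 𝓛_q = { x ↦ [x ≤ t] : t ∈ [q⟩ }. -/
def Lset (q : ℕ) : Set (Fin q → Bool) :=
  { f | ∃ t : Fin q, f = fun x => decide (x ≤ t) }

lemma cell_eq {a b : BB} (ha : a = BB.zero ∨ a = BB.one) (hb : b = BB.zero ∨ b = BB.one) :
    Tcell a b = true ↔ a = b := by
  rcases ha with rfl | rfl <;> rcases hb with rfl | rfl <;> simp [Tcell]

lemma cell_star_left (b : BB) : Tcell BB.star b = true := by cases b <;> rfl

private def lfun (q : ℕ) (t : Fin q) : Fin q → Bool := fun x => decide (x ≤ t)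
private def gfun (q : ℕ) (t : Fin q) : Fin q → Bool := fun x => decide (t ≤ x)

private def Sset {q n : ℕ} (u : Fin q → Fin n → BB) (x : Fin q) : Finset (Fin n) :=
  Finset.univ.filter (fun j => ∃ z ≤ x, u z j ≠ BB.star)

lemma mem_Sset {q n : ℕ} (u : Fin q → Fin n → BB) (x : Fin q) (j : Fin n) :
    j ∈ Sset u x ↔ ∃ z ≤ x, u z j ≠ BB.star := by
  simp [Sset]

lemma reverse_dir (q n : ℕ) (hq : 2 ≤ q)
    (h : Implementable Bstar Bcirc n q (Gset q ∪ Lset q)) : q ≤ n := by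
  obtain ⟨u, θ, hu, hθ, hT⟩ := h
  have hlmem : ∀ t : Fin q, lfun q t ∈ Gset q ∪ Lset q := fun t => Or.inr ⟨t, rfl⟩
  have hgmem : ∀ t : Fin q, gfun q t ∈ Gset q ∪ Lset q := fun t => Or.inl ⟨t, rfl⟩
  have keyl : ∀ t x : Fin q, x ≤ t ↔ ∀ j, Tcell (u x j) (θ (lfun q t) j) = true := by
    intro t x
    have h1 : decide (x ≤ t) = decide (∀ j, Tcell (u x j) (θ (lfun q t) j) = true) :=
      hT (lfun q t) (hlmem t) x
    exact decide_eq_decide.mp h1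
  have keyg : ∀ t x : Fin q, t ≤ x ↔ ∀ j, Tcell (u x j) (θ (gfun q t) j) = true := by
    intro t x
    have h1 : decide (t ≤ x) = decide (∀ j, Tcell (u x j) (θ (gfun q t) j) = true) :=
      hT (gfun q t) (hgmem t) x
    exact decide_eq_decide.mp h1
  have hval : ∀ (z : Fin q) (j : Fin n), u z j ≠ BB.star →
      u z j = BB.zero ∨ u z j = BB.one := by
    intro z j hz
    have := hu z j
    simp only [Bstar, Set.mem_insert_iff, Set.mem_singleton_iff] at this
    tauto
  have hBc : ∀ (f : Fin q → Bool) (hf : f ∈ Gset q ∪ Lset q) (j : Fin n),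
      θ f j = BB.zero ∨ θ f j = BB.one := by
    intro f hf j
    have := hθ f hf j
    simpa [Bcirc, Set.mem_insert_iff, Set.mem_singleton_iff] using this
  -- consistency of non-star values across cells
  have hcons : ∀ (z z' : Fin q) (j : Fin n), u z j ≠ BB.star → u z' j ≠ BB.star →
      u z j = u z' j := by
    intro z z' j hz hz'
    have h1 := (keyl (max z z') z).mp (le_max_left _ _) j
    have h2 := (keyl (max z z') z').mp (le_max_right _ _) j
    have hb := hBc (lfun q (max z z')) (hlmem _) j
    have e1 := (cell_eq (hval z j hz) hb).mp h1
    have e2 := (cell_eq (hval z' j hz') hb).mp h2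
    rw [e1, e2]
  have hmono : ∀ x x' : Fin q, x ≤ x' → Sset u x ⊆ Sset u x' := by
    intro x x' hxx' j hj
    rw [mem_Sset] at hj ⊢
    obtain ⟨z, hz, hzs⟩ := hj
    exact ⟨z, hz.trans hxx', hzs⟩
  -- strict growth
  have hstep : ∀ x x' : Fin q, x < x' → ∃ j, j ∈ Sset u x' ∧ j ∉ Sset u x := by
    intro x x' hxx'
    have hnot : ¬ (x' ≤ x) := not_le.mpr hxx'
    have := (keyl x x').not.mp hnot
    push_neg at this
    obtain ⟨j, hj⟩ := this
    have hjf : Tcell (u x' j) (θ (lfun q x) j) = false := by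
      cases hjj : Tcell (u x' j) (θ (lfun q x) j) with
      | true => exact absurd hjj hj
      | false => rfl
    have hns : u x' j ≠ BB.star := by
      intro hs
      rw [hs, cell_star_left] at hjf
      exact Bool.noConfusion hjf
    refine ⟨j, (mem_Sset u x' j).mpr ⟨x', le_refl _, hns⟩, ?_⟩
    intro hjx
    obtain ⟨z, hz, hzs⟩ := (mem_Sset u x j).mp hjx
    have heq : u z j = u x' j := hcons z x' j hzs hns
    have h1 := (keyl x z).mp hz j
    rw [heq] at h1
    rw [h1] at hjf
    exact Bool.noConfusion hjf
  -- S 0 is nonempty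
  have h0q : (0 : ℕ) < q := by omega
  have h1q : (1 : ℕ) < q := by omega
  have hS0 : 1 ≤ (Sset u ⟨0, h0q⟩).card := by
    have hnot : ¬ ((⟨1, h1q⟩ : Fin q) ≤ ⟨0, h0q⟩) := by
      simp [Fin.le_def]
    have := (keyg ⟨1, h1q⟩ ⟨0, h0q⟩).not.mp hnot
    push_neg at this
    obtain ⟨j, hj⟩ := this
    have hns : u ⟨0, h0q⟩ j ≠ BB.star := by
      intro hs
      rw [hs, cell_star_left] at hj
      exact hj rfl
    have : j ∈ Sset u ⟨0, h0q⟩ := (mem_Sset _ _ _).mpr ⟨⟨0, h0q⟩, le_refl _, hns⟩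
    exact Finset.card_pos.mpr ⟨j, this⟩
  have hcard : ∀ k : ℕ, ∀ hk : k < q, k + 1 ≤ (Sset u ⟨k, hk⟩).card := by
    intro k
    induction k with
    | zero => intro hk; exact hS0
    | succ k ih =>
      intro hk
      have hk' : k < q := Nat.lt_of_succ_lt hk
      have hlt : (⟨k, hk'⟩ : Fin q) < ⟨k + 1, hk⟩ := by simp [Fin.lt_def]
      obtain ⟨j, hj1, hj2⟩ := hstep ⟨k, hk'⟩ ⟨k + 1, hk⟩ hlt
      have hsub := hmono ⟨k, hk'⟩ ⟨k + 1, hk⟩ (le_of_lt hlt)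
      have hss : Sset u ⟨k, hk'⟩ ⊂ Sset u ⟨k + 1, hk⟩ :=
        (Finset.ssubset_iff_of_subset hsub).mpr ⟨j, hj1, hj2⟩
      have := Finset.card_lt_card hss
      have := ih hk'
      omega
  have hfin := hcard (q - 1) (by omega)
  have hle : (Sset u ⟨q - 1, by omega⟩).card ≤ n := by
    have := Finset.card_le_univ (Sset u ⟨q - 1, by omega⟩)
    simpa using this
  omega

lemma forward_dir (q n : ℕ) (h : q ≤ n) (Φ : Set (Fin q → Bool)) :
    Implementable Bstar Bcirc n q Φ := by
  refine ⟨fun x j => if (j : ℕ) = (x : ℕ) then BB.one else BB.star,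
    fun f j => if hj : (j : ℕ) < q then (if f ⟨j, hj⟩ then BB.one else BB.zero) else BB.zero,
    ?_, ?_, ?_⟩
  · intro x j
    dsimp only
    split <;> simp [Bstar]
  · intro f _ j
    dsimp only
    split
    · split <;> simp [Bcirc]
    · simp [Bcirc]
  · intro f _ x
    have hx : (x : ℕ) < n := lt_of_lt_of_le x.isLt h
    have key : (∀ j : Fin n, Tcell (if (j : ℕ) = (x : ℕ) then BB.one else BB.star)
        (if hj : (j : ℕ) < q then (if f ⟨j, hj⟩ then BB.one else BB.zero) else BB.zero) = true)
        ↔ f x = true := by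
      constructor
      · intro hall
        have := hall ⟨x, hx⟩
        simp only [if_pos rfl] at this
        rw [dif_pos x.isLt] at this
        have hfx : f ⟨(x : ℕ), x.isLt⟩ = f x := by congr 1
        rw [hfx] at this
        cases hfv : f x with
        | true => rfl
        | false => simp [hfv, Tcell] at this
      · intro hfx j
        by_cases hjx : (j : ℕ) = (x : ℕ)
        · rw [if_pos hjx]
          have hjq : (j : ℕ) < q := hjx ▸ x.isLt
          rw [dif_pos hjq]
          have : f ⟨(j : ℕ), hjq⟩ = f x := by congr 1; exact Fin.ext hjx
          rw [this, hfx]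
          simp [Tcell]
        · rw [if_neg hjx]
          exact cell_star_left _
    rw [Tword]
    cases hfv : f x with
    | true => symm; rw [decide_eq_true_eq]; exact key.mpr hfv
    | false =>
      symm
      rw [decide_eq_false_iff_not]
      intro hall
      rw [key.mp hall] at hfv
      exact Bool.noConfusion hfv

theorem GLset_implementable_starCirc (q n : ℕ) (hq : 2 ≤ q) (hn : 1 ≤ n) :
    Implementable Bstar Bcirc n q (Gset q ∪ Lset q) ↔ q ≤ n := by
  exact ⟨reverse_dir q n hq, fun h => forward_dir q n h _⟩
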